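/- Suppose a nonnegative C¹ function e : [0,T] → ℝ satisfies e'(t) ≤ C e(t)(e(t) + δ/(1+t)) with C, δ > 0 and e(0) ≤ E₀ > 0. Then for all t in [0,T] with (1+t)^{1+Cδ} − 1 < (1+Cδ)/(C E₀), one has the bound e(t) ≤ (1+t)^{Cδ} ( E₀^{−1} − C/(1+Cδ) · [(1+t)^{1+Cδ} − 1] )^{−1}. -/

import Mathlib

open Set Filter

private lemma stmt7_key (T C δ E₀ : ℝ) (hC : 0 < C) (hδ : 0 < δ) (hE₀ : 0 < E₀)
    (e e' : ℝ → ℝ)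
    (hderiv : ∀ t ∈ Set.Icc (0:ℝ) T, HasDerivAt e (e' t) t)
    (hineq : ∀ t ∈ Set.Icc (0:ℝ) T, e' t ≤ C * e t * (e t + δ / (1+t)))
    (hinit : e 0 ≤ E₀) (c : ℝ) (hc : C < c) (t₀ : ℝ) (ht₀ : t₀ ∈ Set.Icc (0:ℝ) T)
    (hposF : 0 < E₀⁻¹ - c / (1 + C*δ) * ((1+t₀) ^ (1 + C*δ) - 1)) :
    e t₀ ≤ (1+t₀) ^ (C*δ) * (E₀⁻¹ - c / (1 + C*δ) * ((1+t₀) ^ (1 + C*δ) - 1))⁻¹ := by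
  set a := C*δ with ha_def
  have ha : 0 < a := mul_pos hC hδ
  set p := 1 + a with hp_def
  have hp : 0 < p := by positivity
  set F : ℝ → ℝ := fun x => E₀⁻¹ - c/p * ((1+x)^p - 1) with hF_def
  set B : ℝ → ℝ := fun x => (1+x)^a * (F x)⁻¹ with hB_def
  set B' : ℝ → ℝ := fun x =>
    a * (1+x)^(a-1) * (F x)⁻¹ + (1+x)^a * (c * (1+x)^a / (F x)^2) with hB'_def
  have hcC : 0 < c := hC.trans hc
  have hFt₀ : 0 < F t₀ := by
    simp only [hF_def]
    convert hposF using 3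
  have hFpos : ∀ x ∈ Icc (0:ℝ) t₀, 0 < F x := by
    intro x hx
    have h1x : (0:ℝ) < 1 + x := by linarith [hx.1]
    have hle : (1+x)^p ≤ (1+t₀)^p :=
      Real.rpow_le_rpow h1x.le (by linarith [hx.2]) hp.le
    have hm : c/p * ((1+x)^p - 1) ≤ c/p * ((1+t₀)^p - 1) :=
      mul_le_mul_of_nonneg_left (by linarith) (by positivity)
    have := hFt₀
    simp only [hF_def] at this ⊢
    linarith
  have hsub : Icc (0:ℝ) t₀ ⊆ Icc (0:ℝ) T := Icc_subset_Icc le_rfl ht₀.2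
  -- derivative of B
  have hBDeriv : ∀ x ∈ Icc (0:ℝ) t₀, HasDerivAt B (B' x) x := by
    intro x hx
    have h1x : (0:ℝ) < 1 + x := by linarith [hx.1]
    have h1 : HasDerivAt (fun y : ℝ => 1 + y) 1 x := (hasDerivAt_id x).const_add 1
    have hpow : HasDerivAt (fun y : ℝ => (1+y)^p) (1 * p * (1+x)^(p-1)) x :=
      h1.rpow_const (Or.inl h1x.ne')
    have hF' : HasDerivAt F (-(c/p * (1 * p * (1+x)^(p-1)))) x :=
      HasDerivAt.const_sub _ ((hpow.sub_const 1).const_mul (c/p))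
    have hFa : HasDerivAt F (-(c * (1+x)^a)) x := by
      convert hF' using 1
      have hpa : p - 1 = a := by rw [hp_def]; ring
      rw [hpa]
      field_simp
    have hFinv : HasDerivAt (fun y => (F y)⁻¹) (c * (1+x)^a / (F x)^2) x := by
      have h := hFa.inv (hFpos x hx).ne'
      rw [neg_neg] at h
      exact h
    have hga : HasDerivAt (fun y : ℝ => (1+y)^a) (1 * a * (1+x)^(a-1)) x :=
      h1.rpow_const (Or.inl h1x.ne')
    have h : HasDerivAt (fun y => (1+y)^a * (F y)⁻¹) _ x := hga.mul hFinv
    convert h using 1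
    simp only [hB'_def]
    ring
  have hBcont : ContinuousOn B (Icc (0:ℝ) t₀) := fun x hx =>
    (hBDeriv x hx).continuousAt.continuousWithinAt
  have hecont : ContinuousOn e (Icc (0:ℝ) t₀) := fun x hx =>
    (hderiv x (hsub hx)).continuousAt.continuousWithinAt
  have hinit' : e 0 ≤ B 0 := by
    have : B 0 = E₀ := by
      simp only [hB_def, hF_def]
      norm_num [Real.one_rpow]
    rw [this]; exact hinit
  -- the fencing theorem
  have key : ∀ ⦃x⦄, x ∈ Icc (0:ℝ) t₀ → e x ≤ B x := by
    apply image_le_of_deriv_right_lt_deriv_boundary' hecont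
      (fun x hx => (hderiv x (hsub (Ico_subset_Icc_self hx))).hasDerivWithinAt)
      hinit' hBcont
      (fun x hx => (hBDeriv x (Ico_subset_Icc_self hx)).hasDerivWithinAt)
    intro x hx heq
    have hxI : x ∈ Icc (0:ℝ) t₀ := Ico_subset_Icc_self hx
    have h1x : (0:ℝ) < 1 + x := by linarith [hxI.1]
    have hFx := hFpos x hxI
    have hu : (0:ℝ) < (1+x)^a := Real.rpow_pos_of_pos h1x a
    have hBpos : 0 < B x := by
      simp only [hB_def]; positivity
    have hle := hineq x (hsub hxI)
    rw [heq] at hle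
    refine lt_of_le_of_lt hle ?_
    simp only [hB_def, hB'_def]
    rw [show (1+x)^(a-1) = (1+x)^a / (1+x) by
      rw [Real.rpow_sub h1x, Real.rpow_one]]
    rw [ha_def]
    set u := (1+x)^a with hu_def
    set v := F x with hv_def
    have hvne : v ≠ 0 := hFx.ne'
    have hwne : (1+x) ≠ 0 := h1x.ne'
    have hkey : C * (u * v⁻¹) * (u * v⁻¹ + δ / (1 + x)) + (c - C) * (u * v⁻¹)^2
        = C * δ * (u / (1 + x)) * v⁻¹ + u * (c * u / v ^ 2) := by
      field_simp
      ring
    have hpos : 0 < (c - C) * (u * v⁻¹)^2 := by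
      apply mul_pos (by linarith)
      positivity
    linarith
  exact key ⟨ht₀.1, le_refl t₀⟩

theorem stmt7 (T C δ E₀ : ℝ) (hT : 0 ≤ T) (hC : 0 < C) (hδ : 0 < δ) (hE₀ : 0 < E₀)
    (e e' : ℝ → ℝ)
    (hnn : ∀ t ∈ Set.Icc (0:ℝ) T, 0 ≤ e t)
    (hderiv : ∀ t ∈ Set.Icc (0:ℝ) T, HasDerivAt e (e' t) t)
    (hcont : ContinuousOn e' (Set.Icc (0:ℝ) T))
    (hineq : ∀ t ∈ Set.Icc (0:ℝ) T, e' t ≤ C * e t * (e t + δ / (1+t)))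
    (hinit : e 0 ≤ E₀) :
    ∀ t ∈ Set.Icc (0:ℝ) T,
      (1+t) ^ (1 + C*δ) - 1 < (1 + C*δ) / (C * E₀) →
      e t ≤ (1+t) ^ (C*δ) *
        (E₀⁻¹ - C / (1 + C*δ) * ((1+t) ^ (1 + C*δ) - 1))⁻¹ := by
  intro t ht hcond
  have hp : (0:ℝ) < 1 + C*δ := by positivity
  set D := (1+t) ^ (1 + C*δ) - 1 with hD_def
  have hpos0 : 0 < E₀⁻¹ - C / (1 + C*δ) * D := by
    have h := mul_lt_mul_of_pos_left hcond (show 0 < C/(1+C*δ) by positivity)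
    have heq : C/(1+C*δ) * ((1+C*δ)/(C*E₀)) = E₀⁻¹ := by
      field_simp
    rw [heq] at h
    linarith [h]
  have hinner : ContinuousAt (fun c : ℝ => E₀⁻¹ - c / (1 + C*δ) * D) C := by fun_prop
  have hG : Filter.Tendsto (fun c : ℝ => (1+t)^(C*δ) * (E₀⁻¹ - c / (1 + C*δ) * D)⁻¹)
      (nhdsWithin C (Set.Ioi C))
      (nhds ((1+t)^(C*δ) * (E₀⁻¹ - C / (1 + C*δ) * D)⁻¹)) := by
    apply Filter.Tendsto.mono_left _ nhdsWithin_le_nhds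
    exact (continuousAt_const.mul (hinner.inv₀ hpos0.ne')).tendsto
  refine ge_of_tendsto hG ?_
  have h1 : ∀ᶠ c in nhds C, 0 < E₀⁻¹ - c / (1 + C*δ) * D :=
    hinner.eventually_mem (Ioi_mem_nhds hpos0)
  filter_upwards [h1.filter_mono nhdsWithin_le_nhds, self_mem_nhdsWithin] with c hc1 hc2
  exact stmt7_key T C δ E₀ hC hδ hE₀ e e' hderiv hineq hinit c hc2 t ht hc1
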